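/- Let p ∈ (1,∞), let M_n = [2^{n-1}, 2^n) ∩ ℕ for n ≥ 1, and let x_1, ..., x_N be finitely supported real sequences with the support of x_n contained in M_n and ‖x_n‖_{B_p} ≤ 1 for each n. Define Δ : c₀₀ → c₀₀ by Δ(y) = Σ_{n=1}^N y_{2^n−1} · x_n, where y_j denotes the j-th coordinate of y. Then for every finitely supported real sequence y and every non-empty finite subset N ⊆ ℕ, one has μ(Δ(y), N) ≤ μ(y, uep(N)), where uep(N) = { 2^k − 1 : k ∈ ℕ, N ∩ M_k ≠ ∅ }. -/

import Mathlib

/-- A non-empty finite subset `M` of `ℕ = {1,2,...}` is admissible if `|M| ≤ min M`,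
i.e. `M` is non-empty and its cardinality is at most every element of `M`. -/
def Admissible (M : Finset ℕ) : Prop := M.Nonempty ∧ ∀ k ∈ M, M.card ≤ k

/-- `μ(x, N) = ∑_{n ∈ N} |x_n|`. -/
def mu (x : ℕ → ℝ) (N : Finset ℕ) : ℝ := ∑ n ∈ N, |x n|

/-- `N₁ < N₂ < ⋯ < N_k`: every element of `N i` is smaller than every element of `N j`
whenever `i < j`. -/
def SepChain {k : ℕ} (N : Fin k → Finset ℕ) : Prop :=
  ∀ i j : Fin k, i < j → ∀ a ∈ N i, ∀ b ∈ N j, a < b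

/-- The Baernstein norm
`‖x‖_{B_p} = sup { ν_p(x; N₁,…,N_k) : k ≥ 1, N₁ < ⋯ < N_k admissible }`, where
`ν_p(x; N₁,…,N_k) = (∑_j μ(x,N_j)^p)^{1/p}`. -/
noncomputable def BpNorm (p : ℝ) (x : ℕ → ℝ) : ℝ :=
  sSup { t : ℝ | ∃ (k : ℕ) (N : Fin k → Finset ℕ), 0 < k ∧ (∀ j, Admissible (N j)) ∧
    SepChain N ∧ t = (∑ j, (mu x (N j)) ^ p) ^ (1 / p) }

/-- The block `M_n = [2^{n-1}, 2^n) ∩ ℕ`. -/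
def Mblock (n : ℕ) : Finset ℕ := Finset.Ico (2 ^ (n - 1)) (2 ^ n)

/-- `uep(N) = { 2^k − 1 : k ≥ 1, N ∩ M_k ≠ ∅ }`, the set of upper end points of the
blocks `M_k` that `N` intersects. -/
def uep (N : Finset ℕ) : Finset ℕ :=
  ((Finset.range (N.sup id + 2)).filter fun k => 1 ≤ k ∧ (N ∩ Mblock k).Nonempty).image
    fun k => 2 ^ k - 1

/-- The diagonal operator `Δ(y) = ∑_{n=1}^K y_{2^n−1} · x_n`. -/
def DeltaOp (K : ℕ) (x : ℕ → ℕ → ℝ) (y : ℕ → ℝ) : ℕ → ℝ :=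
  fun j => ∑ n ∈ Finset.Icc 1 K, y (2 ^ n - 1) * x n j


/-- Let `p ∈ (1,∞)` and let `x_1, …, x_K` be finitely supported real sequences with the
support of `x_n` contained in `M_n = [2^{n-1}, 2^n) ∩ ℕ` and `‖x_n‖_{B_p} ≤ 1` for each
`n`.  Define `Δ(y) = ∑_{n=1}^K y_{2^n−1} · x_n`.  Then for every finitely supported real
sequence `y` and every non-empty finite subset `S` of `ℕ = {1, 2, …}`,
`μ(Δ(y), S) ≤ μ(y, uep(S))`. -/
lemma mu_nonneg (x : ℕ → ℝ) (N : Finset ℕ) : 0 ≤ mu x N :=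
  Finset.sum_nonneg fun _ _ => abs_nonneg _

/-- If x vanishes outside M, then mu x N ≤ mu x M. -/
lemma mu_le_mu (x : ℕ → ℝ) (M : Finset ℕ) (hx : ∀ j, x j ≠ 0 → j ∈ M)
    (N : Finset ℕ) : mu x N ≤ mu x M := by
  have h1 : mu x N = mu x (N ∩ M) := by
    refine (Finset.sum_subset Finset.inter_subset_left ?_).symm
    intro a ha hna
    have : x a = 0 := by
      by_contra h
      exact hna (Finset.mem_inter.2 ⟨ha, hx a h⟩)
    simp [this]
  rw [h1]
  exact Finset.sum_le_sum_of_subset_of_nonneg Finset.inter_subset_right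
    (fun _ _ _ => abs_nonneg _)

lemma sum_mu_le (x : ℕ → ℝ) (M : Finset ℕ) (hx : ∀ j, x j ≠ 0 → j ∈ M)
    {k : ℕ} (N : Fin k → Finset ℕ) (hsep : SepChain N) :
    ∑ j, mu x (N j) ≤ mu x M := by
  classical
  have h1 : ∀ j, mu x (N j) = ∑ a ∈ M, if a ∈ N j then |x a| else 0 := by
    intro j
    rw [mu, ← Finset.sum_filter]
    refine (Finset.sum_subset (fun a ha => (Finset.mem_filter.1 ha).2) ?_).symm
    intro a ha hna
    have : a ∉ M := fun hM => hna (Finset.mem_filter.2 ⟨hM, ha⟩)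
    have : x a = 0 := by by_contra h; exact this (hx a h)
    simp [this]
  calc ∑ j, mu x (N j) = ∑ j, ∑ a ∈ M, if a ∈ N j then |x a| else 0 := by
        simp only [h1]
    _ = ∑ a ∈ M, ∑ j, if a ∈ N j then |x a| else 0 := Finset.sum_comm
    _ ≤ ∑ a ∈ M, |x a| := by
        refine Finset.sum_le_sum fun a _ => ?_
        rw [← Finset.sum_filter, Finset.sum_const, nsmul_eq_mul]
        have hcard : (Finset.univ.filter fun j => a ∈ N j).card ≤ 1 := by
          rw [Finset.card_le_one]
          intro i hi j hj
          by_contra hij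
          rcases lt_or_gt_of_ne hij with h | h
          · exact lt_irrefl a (hsep i j h a (Finset.mem_filter.1 hi).2 a
              (Finset.mem_filter.1 hj).2)
          · exact lt_irrefl a (hsep j i h a (Finset.mem_filter.1 hj).2 a
              (Finset.mem_filter.1 hi).2)
        calc ((Finset.univ.filter fun j => a ∈ N j).card : ℝ) * |x a|
            ≤ 1 * |x a| := by
              apply mul_le_mul_of_nonneg_right _ (abs_nonneg _)
              exact_mod_cast hcard
          _ = |x a| := one_mul _
    _ = mu x M := rfl

lemma bp_bddAbove (p : ℝ) (hp : 1 < p) (x : ℕ → ℝ) (M : Finset ℕ)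
    (hx : ∀ j, x j ≠ 0 → j ∈ M) :
    BddAbove { t : ℝ | ∃ (k : ℕ) (N : Fin k → Finset ℕ), 0 < k ∧ (∀ j, Admissible (N j)) ∧
      SepChain N ∧ t = (∑ j, (mu x (N j)) ^ p) ^ (1 / p) } := by
  have hp0 : p ≠ 0 := by linarith
  use mu x M
  rintro t ⟨k, N, -, -, hsep, rfl⟩
  set T := mu x M with hTdef
  have hT : 0 ≤ T := mu_nonneg x M
  have hμT : ∀ j, mu x (N j) ≤ T := fun j => mu_le_mu x M hx (N j)
  have hsum : ∑ j, mu x (N j) ^ p ≤ T ^ p := by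
    have step3 : ∀ j : Fin k, mu x (N j) ^ p ≤ mu x (N j) * T ^ (p - 1) := by
      intro j
      rcases eq_or_lt_of_le (mu_nonneg x (N j)) with h | h
      · rw [← h, Real.zero_rpow hp0, zero_mul]
      · calc mu x (N j) ^ p = mu x (N j) ^ (1 + (p - 1)) := by ring_nf
          _ = mu x (N j) ^ (1:ℝ) * mu x (N j) ^ (p - 1) := Real.rpow_add h 1 (p-1)
          _ = mu x (N j) * mu x (N j) ^ (p - 1) := by rw [Real.rpow_one]
          _ ≤ mu x (N j) * T ^ (p - 1) := by
              apply mul_le_mul_of_nonneg_left _ h.le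
              exact Real.rpow_le_rpow h.le (hμT j) (by linarith)
    calc ∑ j, mu x (N j) ^ p ≤ ∑ j, mu x (N j) * T ^ (p - 1) :=
          Finset.sum_le_sum fun j _ => step3 j
      _ = (∑ j, mu x (N j)) * T ^ (p - 1) := (Finset.sum_mul ..).symm
      _ ≤ T * T ^ (p - 1) := by
          apply mul_le_mul_of_nonneg_right (sum_mu_le x M hx N hsep)
            (Real.rpow_nonneg hT _)
      _ = T ^ p := by
          rcases eq_or_lt_of_le hT with h | h
          · rw [← h, Real.zero_rpow hp0, zero_mul]
          · conv_rhs => rw [show p = 1 + (p - 1) by ring]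
            rw [Real.rpow_add h, Real.rpow_one]
  have hstep : (∑ j, mu x (N j) ^ p) ^ (1/p) ≤ (T ^ p) ^ (1/p) := by
    apply Real.rpow_le_rpow (Finset.sum_nonneg fun j _ =>
      Real.rpow_nonneg (mu_nonneg x (N j)) p) hsum (by positivity)
  have : (T ^ p) ^ (1/p) = T := by
    rw [← Real.rpow_mul hT, mul_one_div_cancel hp0, Real.rpow_one]
  rwa [this] at hstep

lemma mu_le_one (p : ℝ) (hp : 1 < p) (x : ℕ → ℝ) (M : Finset ℕ)
    (hx : ∀ j, x j ≠ 0 → j ∈ M) (hnorm : BpNorm p x ≤ 1)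
    (A : Finset ℕ) (hadm : Admissible A) : mu x A ≤ 1 := by
  have hp0 : p ≠ 0 := by linarith
  have hmem : mu x A ∈ { t : ℝ | ∃ (k : ℕ) (N : Fin k → Finset ℕ), 0 < k ∧
      (∀ j, Admissible (N j)) ∧ SepChain N ∧
      t = (∑ j, (mu x (N j)) ^ p) ^ (1 / p) } := by
    refine ⟨1, fun _ => A, one_pos, fun _ => hadm, ?_, ?_⟩
    · intro i j hij
      exact absurd (Subsingleton.elim i j ▸ hij) (lt_irrefl j)
    · rw [Fin.sum_univ_one, ← Real.rpow_mul (mu_nonneg x A),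
        mul_one_div_cancel hp0, Real.rpow_one]
  calc mu x A ≤ BpNorm p x := le_csSup (bp_bddAbove p hp x M hx) hmem
    _ ≤ 1 := hnorm

lemma admissible_of_subset_Mblock {n : ℕ} (hn : 1 ≤ n) {A : Finset ℕ}
    (hA : A ⊆ Mblock n) (hne : A.Nonempty) : Admissible A := by
  refine ⟨hne, fun k hk => ?_⟩
  have h1 : A.card ≤ (Mblock n).card := Finset.card_le_card hA
  have h2 : (Mblock n).card = 2 ^ n - 2 ^ (n - 1) := Nat.card_Ico _ _
  have h3 : 2 ^ n = 2 * 2 ^ (n - 1) := by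
    conv_lhs => rw [show n = (n - 1) + 1 by omega]
    ring
  have h4 : 2 ^ (n - 1) ≤ k := (Finset.mem_Ico.1 (hA hk)).1
  omega

theorem stmt_11 (p : ℝ) (hp : 1 < p) (K : ℕ) (hK : 1 ≤ K) (x : ℕ → ℕ → ℝ)
    (hsupp : ∀ n, 1 ≤ n → n ≤ K → ∀ j, x n j ≠ 0 → j ∈ Mblock n)
    (hnorm : ∀ n, 1 ≤ n → n ≤ K → BpNorm p (x n) ≤ 1)
    (y : ℕ → ℝ) (hy : (Function.support y).Finite)
    (S : Finset ℕ) (hS : S.Nonempty) (hS0 : 0 ∉ S) :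
    mu (DeltaOp K x y) S ≤ mu y (uep S) := by
  classical
  set T : Finset ℕ := (Finset.Icc 1 K).filter (fun n => (S ∩ Mblock n).Nonempty) with hT
  have key : ∀ n ∈ T, mu (x n) (S ∩ Mblock n) ≤ 1 := by
    intro n hn
    obtain ⟨hn1, hne⟩ := Finset.mem_filter.1 hn
    obtain ⟨h1, h2⟩ := Finset.mem_Icc.1 hn1
    exact mu_le_one p hp (x n) (Mblock n) (hsupp n h1 h2) (hnorm n h1 h2) _
      (admissible_of_subset_Mblock h1 Finset.inter_subset_right hne)
  have step1 : mu (DeltaOp K x y) S ≤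
      ∑ n ∈ Finset.Icc 1 K, |y (2 ^ n - 1)| * mu (x n) (S ∩ Mblock n) := by
    calc mu (DeltaOp K x y) S
        = ∑ j ∈ S, |∑ n ∈ Finset.Icc 1 K, y (2 ^ n - 1) * x n j| := rfl
      _ ≤ ∑ j ∈ S, ∑ n ∈ Finset.Icc 1 K, |y (2 ^ n - 1) * x n j| :=
          Finset.sum_le_sum fun j _ => Finset.abs_sum_le_sum_abs _ _
      _ = ∑ n ∈ Finset.Icc 1 K, ∑ j ∈ S, |y (2 ^ n - 1)| * |x n j| := by
          rw [Finset.sum_comm]; simp [abs_mul]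
      _ = ∑ n ∈ Finset.Icc 1 K, |y (2 ^ n - 1)| * ∑ j ∈ S, |x n j| := by
          simp [Finset.mul_sum]
      _ = ∑ n ∈ Finset.Icc 1 K, |y (2 ^ n - 1)| * mu (x n) (S ∩ Mblock n) := by
          refine Finset.sum_congr rfl fun n hn => ?_
          obtain ⟨h1, h2⟩ := Finset.mem_Icc.1 hn
          congr 1
          refine (Finset.sum_subset Finset.inter_subset_left fun a ha hna => ?_).symm
          have : x n a = 0 := by
            by_contra h
            exact hna (Finset.mem_inter.2 ⟨ha, hsupp n h1 h2 a h⟩)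
          simp [this]
  have step2 : ∑ n ∈ Finset.Icc 1 K, |y (2 ^ n - 1)| * mu (x n) (S ∩ Mblock n) ≤
      ∑ n ∈ T, |y (2 ^ n - 1)| := by
    rw [hT, Finset.sum_filter]
    refine Finset.sum_le_sum fun n hn => ?_
    by_cases h : (S ∩ Mblock n).Nonempty
    · simp only [h, if_true]
      calc |y (2 ^ n - 1)| * mu (x n) (S ∩ Mblock n)
          ≤ |y (2 ^ n - 1)| * 1 := by
            apply mul_le_mul_of_nonneg_left _ (abs_nonneg _)
            exact key n (Finset.mem_filter.2 ⟨hn, h⟩)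
        _ = |y (2 ^ n - 1)| := mul_one _
    · have : S ∩ Mblock n = ∅ := Finset.not_nonempty_iff_eq_empty.1 h
      simp [h, this, mu]
  have step3 : ∑ n ∈ T, |y (2 ^ n - 1)| = ∑ m ∈ T.image (fun n => 2 ^ n - 1), |y m| := by
    have hinj : ∀ a ∈ T, ∀ b ∈ T, 2 ^ a - 1 = 2 ^ b - 1 → a = b := by
      intro a _ b _ hab
      have ha : 1 ≤ 2 ^ a := Nat.one_le_two_pow
      have hb : 1 ≤ 2 ^ b := Nat.one_le_two_pow
      have : (2:ℕ) ^ a = 2 ^ b := by omega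
      exact Nat.pow_right_injective (le_refl 2) this
    rw [Finset.sum_image hinj]
  have himg : T.image (fun n => 2 ^ n - 1) ⊆ uep S := by
    intro m hm
    obtain ⟨n, hn, rfl⟩ := Finset.mem_image.1 hm
    obtain ⟨hn1, hne⟩ := Finset.mem_filter.1 hn
    obtain ⟨h1, h2⟩ := Finset.mem_Icc.1 hn1
    refine Finset.mem_image.2 ⟨n, Finset.mem_filter.2 ⟨?_, h1, hne⟩, rfl⟩
    obtain ⟨a, ha⟩ := hne
    obtain ⟨haS, haM⟩ := Finset.mem_inter.1 ha
    have h3 : 2 ^ (n - 1) ≤ a := (Finset.mem_Ico.1 haM).1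
    have h4 : a ≤ S.sup id := Finset.le_sup (f := id) haS
    have h5 : n - 1 < 2 ^ (n - 1) := Nat.lt_two_pow_self
    refine Finset.mem_range.2 (by omega)
  have step4 : ∑ m ∈ T.image (fun n => 2 ^ n - 1), |y m| ≤ mu y (uep S) :=
    Finset.sum_le_sum_of_subset_of_nonneg himg fun _ _ _ => abs_nonneg _
  calc mu (DeltaOp K x y) S ≤ _ := step1
    _ ≤ _ := step2
    _ = _ := step3
    _ ≤ _ := step4
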